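/- arXiv:0911.4366 — 2 statements merged into one kernel-verified Lean document; each statement's English description precedes it below -/
import Mathlib

section
/- A connected finite simple graph contains no diamond if and only if every edge of the graph lies in at most one cycle (i.e., the graph is a cactus). -/
open SimpleGraph

variable {V : Type*}

/-- A diamond in a simple graph: two distinct vertices joined by three pairwise
internally vertex-disjoint paths. -/
structure SimpleGraph.Diamond (G : SimpleGraph V) where
  u : V
  v : V
  ne : u ≠ v
  p₁ : G.Walk u v
  p₂ : G.Walk u v
  p₃ : G.Walk u v
  h₁ : p₁.IsPath
  h₂ : p₂.IsPath
  h₃ : p₃.IsPath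
  ne₁₂ : p₁ ≠ p₂
  ne₁₃ : p₁ ≠ p₃
  ne₂₃ : p₂ ≠ p₃
  disj₁₂ : ∀ x, x ∈ p₁.support → x ∈ p₂.support → x = u ∨ x = v
  disj₁₃ : ∀ x, x ∈ p₁.support → x ∈ p₃.support → x = u ∨ x = v
  disj₂₃ : ∀ x, x ∈ p₂.support → x ∈ p₃.support → x = u ∨ x = v

/-- The number of edges of a diamond. -/
def SimpleGraph.Diamond.size {G : SimpleGraph V} (D : G.Diamond) : ℕ :=
  D.p₁.length + D.p₂.length + D.p₃.length

/-- The vertex set of a diamond. -/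
def SimpleGraph.Diamond.vertexSet {G : SimpleGraph V} (D : G.Diamond) : Set V :=
  {x | x ∈ D.p₁.support ∨ x ∈ D.p₂.support ∨ x ∈ D.p₃.support}

/-- The edge set of a diamond. -/
def SimpleGraph.Diamond.edgeSet {G : SimpleGraph V} (D : G.Diamond) : Set (Sym2 V) :=
  {e | e ∈ D.p₁.edges ∨ e ∈ D.p₂.edges ∨ e ∈ D.p₃.edges}

/-- A set of vertices hitting every diamond of `G`. -/
def SimpleGraph.IsDiamondHittingSet (G : SimpleGraph V) (X : Set V) : Prop :=
  ∀ D : G.Diamond, ∃ x ∈ X, x ∈ D.vertexSet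

/-- The cycles of `G`, identified with their edge sets. -/
def SimpleGraph.cycleSet (G : SimpleGraph V) : Set (Set (Sym2 V)) :=
  {s | ∃ (v : V) (w : G.Walk v v), w.IsCycle ∧ s = {e | e ∈ w.edges}}

/-- The cycles of length `i` of `G`, identified with their edge sets. -/
def SimpleGraph.cycleSetLen (G : SimpleGraph V) (i : ℕ) : Set (Set (Sym2 V)) :=
  {s | ∃ (v : V) (w : G.Walk v v), w.IsCycle ∧ w.length = i ∧ s = {e | e ∈ w.edges}}

/-- The cycles of length `i` of `G` passing through `v`, identified with their edge sets. -/
def SimpleGraph.cycleSetLenThrough (G : SimpleGraph V) (i : ℕ) (v : V) : Set (Set (Sym2 V)) :=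
  {s | ∃ w : G.Walk v v, w.IsCycle ∧ w.length = i ∧ s = {e | e ∈ w.edges}}

/-- The set of vertices at distance exactly `d` from `u`. -/
def SimpleGraph.sphere (G : SimpleGraph V) (u : V) (d : ℕ) : Set V :=
  {w | G.Reachable u w ∧ G.dist u w = d}


namespace DiamondAux

open SimpleGraph Walk

variable {V : Type*} {G : SimpleGraph V}

lemma path_loop_eq {v : V} {p : G.Walk v v} (hp : p.IsPath) : p = Walk.nil := by
  cases p with
  | nil => rfl
  | cons h t =>
    rw [Walk.cons_isPath_iff] at hp
    exact absurd t.end_mem_support hp.2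

lemma last_edge {a : V} {e : Sym2 V} (ha : a ∈ e) :
    ∀ {u : V} (t : G.Walk u a), t.support.Nodup → e ∈ t.edges →
      ∃ (c : V) (h : G.Adj c a) (t₀ : G.Walk u c), t = t₀.concat h ∧ e = s(c, a)
  | u, Walk.nil, _, he => by simp at he
  | u, Walk.cons hadj rest, ht, he => by
    rw [Walk.support_cons, List.nodup_cons] at ht
    rw [Walk.edges_cons, List.mem_cons] at he
    rcases he with he | he
    · subst he
      rcases Sym2.mem_iff.mp ha with rfl | rfl
      · exact absurd rest.end_mem_support ht.1
      · have hrest : rest = Walk.nil := path_loop_eq ((Walk.isPath_def _).mpr ht.2)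
        subst hrest
        exact ⟨u, hadj, Walk.nil, rfl, rfl⟩
    · obtain ⟨c, h, t₀, rfl, rfl⟩ := last_edge ha rest ht.2 he
      exact ⟨c, h, Walk.cons hadj t₀, (Walk.concat_cons _ _ _).symm, rfl⟩

lemma path_single_edge {u v : V} {p : G.Walk u v} (hp : p.IsPath) (he : s(u, v) ∈ p.edges) :
    ∃ h : G.Adj u v, p = Walk.cons h Walk.nil := by
  obtain ⟨c, h, t₀, rfl, hce⟩ :=
    last_edge (Sym2.mem_mk_right u v) p hp.support_nodup he
  have hcu : u = c := Sym2.congr_left.mp hce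
  subst hcu
  have ht₀ : t₀ = Walk.nil := by
    apply path_loop_eq
    rw [Walk.concat_eq_append] at hp
    exact hp.of_append_left
  subst ht₀
  exact ⟨h, rfl⟩

lemma cycle_at_edge {a b : V} (c : G.Walk a a) (hc : c.IsCycle) (hab : a ≠ b)
    (he : s(a, b) ∈ c.edges) :
    ∃ p : G.Walk a b, p.IsPath ∧ s(a, b) ∉ p.edges ∧
      ∀ f, f ∈ c.edges ↔ f = s(a, b) ∨ f ∈ p.edges := by
  cases c with
  | nil => simp at he
  | @cons _ w _ hadj t =>
    rw [Walk.cons_isCycle_iff] at hc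
    obtain ⟨ht, het⟩ := hc
    by_cases hw : w = b
    · subst hw
      refine ⟨t.reverse, ht.reverse, ?_, ?_⟩
      · simpa [Walk.edges_reverse] using het
      · intro f
        rw [Walk.edges_cons, List.mem_cons, Walk.edges_reverse, List.mem_reverse]
    · have het' : s(a, b) ∈ t.edges := by
        rcases List.mem_cons.mp ((Walk.edges_cons hadj t) ▸ he) with h | h
        · exact absurd (Sym2.congr_right.mp h) (Ne.symm hw)
        · exact h
      obtain ⟨c', h', t₀, rfl, hce⟩ :=
        last_edge (Sym2.mem_mk_left a b) t ht.support_nodup het'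
      have hbc : b = c' := Sym2.congr_right.mp (Sym2.eq_swap.trans hce.symm) |>.symm
      subst hbc
      have ht₀ : t₀.IsPath := by
        rw [Walk.concat_eq_append] at ht
        exact ht.of_append_left
      have hat₀ : a ∉ t₀.support := by
        have := ht.support_nodup
        rw [Walk.support_concat] at this
        simp only [List.concat_eq_append, List.nodup_append, List.nodup_cons] at this
        intro hmem
        exact this.2.2 _ hmem _ (List.mem_singleton_self a) rfl
      have hba : s(b, a) ∉ t₀.edges := by
        have := ht.edges_nodup
        rw [Walk.edges_concat, List.concat_eq_append, List.nodup_append] at this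
        intro hmem
        exact this.2.2 _ hmem _ (List.mem_singleton_self _) rfl
      refine ⟨Walk.cons hadj t₀, ?_, ?_, ?_⟩
      · rw [Walk.cons_isPath_iff]; exact ⟨ht₀, hat₀⟩
      · rw [Walk.edges_cons, List.mem_cons]
        rintro (h | h)
        · exact hw (Sym2.congr_right.mp h).symm
        · exact hba (Sym2.eq_swap ▸ h)
      · intro f
        simp only [Walk.edges_cons, Walk.edges_concat, List.concat_eq_append,
          List.mem_append, List.mem_cons]
        constructor
        · rintro (rfl | h | rfl | h)
          · exact Or.inr (Or.inl rfl)
          · exact Or.inr (Or.inr h)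
          · exact Or.inl Sym2.eq_swap.symm
          · exact absurd h List.not_mem_nil
        · rintro (rfl | rfl | h)
          · exact Or.inr (Or.inr (Or.inl Sym2.eq_swap))
          · exact Or.inl rfl
          · exact Or.inr (Or.inl h)

lemma cycle_edge_decomp {v a b : V} (w : G.Walk v v) (hw : w.IsCycle) (hab : a ≠ b)
    (he : s(a, b) ∈ w.edges) :
    ∃ p : G.Walk a b, p.IsPath ∧ s(a, b) ∉ p.edges ∧
      ∀ f, f ∈ w.edges ↔ f = s(a, b) ∨ f ∈ p.edges := by
  classical
  have haw : a ∈ w.support := w.fst_mem_support_of_mem_edges he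
  have hrot := hw.rotate haw
  have hedges : ∀ f : Sym2 V, f ∈ (w.rotate a haw).edges ↔ f ∈ w.edges :=
    fun f => (w.rotate_edges (u := a) haw).mem_iff
  obtain ⟨p, hp, hep, hiff⟩ := cycle_at_edge (w.rotate a haw) hrot hab ((hedges _).mpr he)
  exact ⟨p, hp, hep, fun f => by rw [← hedges f]; exact hiff f⟩

end DiamondAux

namespace DiamondAux

open SimpleGraph Walk

variable {V : Type*} {G : SimpleGraph V}

lemma lcp : ∀ {a b : V} (p q : G.Walk a b), p.IsPath → q.IsPath → p ≠ q → a ≠ b →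
    ∃ (x x₁ x₂ : V) (r : G.Walk a x) (h₁ : G.Adj x x₁) (h₂ : G.Adj x x₂)
      (p' : G.Walk x₁ b) (q' : G.Walk x₂ b),
      x₁ ≠ x₂ ∧ p = r.append (Walk.cons h₁ p') ∧ q = r.append (Walk.cons h₂ q')
  | _, _, Walk.nil, _, _, _, _, hab => absurd rfl hab
  | _, _, Walk.cons _ _, Walk.nil, _, _, _, hab => absurd rfl hab
  | a, b, Walk.cons (v := w₁) h₁ t₁, Walk.cons (v := w₂) h₂ t₂, hp, hq, hne, hab => by
    by_cases hw : w₁ = w₂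
    · subst hw
      have htne : t₁ ≠ t₂ := by rintro rfl; exact hne rfl
      have hwb : w₁ ≠ b := by
        rintro rfl
        have e1 : t₁ = Walk.nil := path_loop_eq hp.of_cons
        have e2 : t₂ = Walk.nil := path_loop_eq hq.of_cons
        exact htne (e1.trans e2.symm)
      obtain ⟨x, x₁, x₂, r, hh₁, hh₂, p', q', hx, hpe, hqe⟩ :=
        lcp t₁ t₂ hp.of_cons hq.of_cons htne hwb
      exact ⟨x, x₁, x₂, Walk.cons h₁ r, hh₁, hh₂, p', q', hx,
        by rw [Walk.cons_append, ← hpe], by rw [Walk.cons_append, ← hqe]⟩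
    · exact ⟨a, w₁, w₂, Walk.nil, h₁, h₂, t₁, t₂, hw,
        (Walk.nil_append _).symm, (Walk.nil_append _).symm⟩

lemma first_in_set {S : Set V} : ∀ {c d : V} (w : G.Walk c d), d ∈ S →
    ∃ (y : V) (w₁ : G.Walk c y) (w₂ : G.Walk y d),
      w = w₁.append w₂ ∧ y ∈ S ∧ ∀ z ∈ w₁.support, z ≠ y → z ∉ S
  | c, _, Walk.nil, hd => ⟨c, Walk.nil, Walk.nil, rfl, hd, by
      intro z hz hne
      simp only [Walk.support_nil, List.mem_singleton] at hz
      exact absurd hz hne⟩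
  | c, d, Walk.cons h t, hd => by
    by_cases hc : c ∈ S
    · refine ⟨c, Walk.nil, Walk.cons h t, rfl, hc, ?_⟩
      intro z hz hne
      simp only [Walk.support_nil, List.mem_singleton] at hz
      exact absurd hz hne
    · obtain ⟨y, w₁, w₂, hw, hy, hmin⟩ := first_in_set t hd
      refine ⟨y, Walk.cons h w₁, w₂, by rw [Walk.cons_append, hw], hy, ?_⟩
      intro z hz hne
      rw [Walk.support_cons, List.mem_cons] at hz
      rcases hz with rfl | hz
      · exact hc
      · exact hmin z hz hne

lemma append_reverse_isCycle {u v : V} (huv : u ≠ v) (p q : G.Walk u v)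
    (hp : p.IsPath) (hq : q.IsPath) (hne : p ≠ q)
    (hdisj : ∀ x, x ∈ p.support → x ∈ q.support → x = u ∨ x = v) :
    (p.append q.reverse).IsCycle := by
  have hedge_disj : ∀ f ∈ p.edges, f ∉ q.edges := by
    intro f
    induction f using Sym2.ind with
    | _ x y =>
      intro hfp hfq
      have hx : x = u ∨ x = v :=
        hdisj x (p.fst_mem_support_of_mem_edges hfp) (q.fst_mem_support_of_mem_edges hfq)
      have hy : y = u ∨ y = v :=
        hdisj y (p.snd_mem_support_of_mem_edges hfp) (q.snd_mem_support_of_mem_edges hfq)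
      have hxy : x ≠ y := (p.adj_of_mem_edges hfp).ne
      have hfuv : s(x, y) = s(u, v) := by
        rcases hx with rfl | rfl <;> rcases hy with rfl | rfl
        · exact absurd rfl hxy
        · rfl
        · exact Sym2.eq_swap
        · exact absurd rfl hxy
      rw [hfuv] at hfp hfq
      obtain ⟨ha1, e1⟩ := path_single_edge hp hfp
      obtain ⟨ha2, e2⟩ := path_single_edge hq hfq
      exact hne (by rw [e1, e2])
  rw [Walk.isCycle_def]
  refine ⟨?_, ?_, ?_⟩
  · rw [Walk.isTrail_def, Walk.edges_append, Walk.edges_reverse, List.nodup_append]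
    exact ⟨hp.isTrail.edges_nodup, List.nodup_reverse.mpr hq.isTrail.edges_nodup,
      fun f hf f' hf' hff => by subst hff; exact hedge_disj f hf (List.mem_reverse.mp hf')⟩
  · intro h
    have := congrArg Walk.length h
    rw [Walk.length_append, Walk.length_nil] at this
    have hp0 : p.length = 0 := by omega
    exact huv (Walk.eq_of_length_eq_zero hp0)
  · rw [Walk.tail_support_append, List.nodup_append]
    refine ⟨hp.support_nodup.tail, hq.reverse.support_nodup.tail, ?_⟩
    intro z hz1 z' hz2 hzz
    subst hzz
    have hzp : z ∈ p.support := List.mem_of_mem_tail hz1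
    have hzq : z ∈ q.support := by
      have := List.mem_of_mem_tail hz2
      rwa [Walk.support_reverse, List.mem_reverse] at this
    have hu : u ∉ p.support.tail := by
      have := hp.support_nodup
      rw [p.support_eq_cons, List.nodup_cons] at this
      exact this.1
    have hv : v ∉ q.reverse.support.tail := by
      have := hq.reverse.support_nodup
      rw [q.reverse.support_eq_cons, List.nodup_cons] at this
      exact this.1
    rcases hdisj z hzp hzq with rfl | rfl
    · exact hu hz1
    · exact hv hz2

end DiamondAux

namespace DiamondAux

open SimpleGraph Walk

variable {V : Type*} {G : SimpleGraph V}

lemma diamond_of_two_paths {a b : V} (hab : G.Adj a b) (p q : G.Walk a b)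
    (hp : p.IsPath) (hq : q.IsPath) (hep : s(a, b) ∉ p.edges) (heq : s(a, b) ∉ q.edges)
    (hne : p ≠ q) : Nonempty G.Diamond := by
  classical
  obtain ⟨x, x₁, x₂, r, h₁, h₂, p', q', hx12, hpe, hqe⟩ := lcp p q hp hq hne hab.ne
  have hp2 : (r.append (Walk.cons h₁ p')).IsPath := hpe ▸ hp
  have hq2 : (r.append (Walk.cons h₂ q')).IsPath := hqe ▸ hq
  have hr : r.IsPath := hp2.of_append_left
  have hP' : (Walk.cons h₁ p').IsPath := hp2.of_append_right
  have hQ' : (Walk.cons h₂ q').IsPath := hq2.of_append_right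
  have hp' : p'.IsPath := hP'.of_cons
  have hq' : q'.IsPath := hQ'.of_cons
  have hxp' : x ∉ p'.support := ((Walk.cons_isPath_iff _ _).mp hP').2
  have hxq' : x ∉ q'.support := ((Walk.cons_isPath_iff _ _).mp hQ').2
  obtain ⟨y, q₁, q₂, hq'eq, hyP, hmin⟩ :=
    first_in_set (S := {z | z ∈ (Walk.cons h₁ p').support}) q'
      (by simp only [Set.mem_setOf_eq]; exact Walk.end_mem_support _)
  simp only [Set.mem_setOf_eq] at hyP
  have hyq' : y ∈ q'.support := by
    rw [hq'eq, Walk.mem_support_append_iff]; exact Or.inl q₁.end_mem_support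
  have hxy : x ≠ y := fun h => hxq' (h ▸ hyq')
  have hyp' : y ∈ p'.support := by
    rw [Walk.support_cons, List.mem_cons] at hyP
    rcases hyP with rfl | hyP
    · exact absurd rfl hxy.symm
    · exact hyP
  have hminP : ∀ z, z ∈ q₁.support → z ∈ p'.support → z = y := by
    intro z hz hzp
    by_contra hzy
    exact hmin z hz hzy
      (by simp only [Set.mem_setOf_eq, Walk.support_cons, List.mem_cons]; exact Or.inr hzp)
  set tU := p'.takeUntil y hyp' with htUdef
  set P₂ := p'.dropUntil y hyp' with hP₂def
  have hspec : tU.append P₂ = p' := p'.take_spec hyp'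
  have htUpath : tU.IsPath := hp'.takeUntil hyp'
  have hP₂path : P₂.IsPath := hp'.dropUntil hyp'
  have hq₁path : q₁.IsPath := (hq'eq ▸ hq').of_append_left
  have htUsub : ∀ z, z ∈ tU.support → z ∈ p'.support :=
    fun z hz => p'.support_takeUntil_subset hyp' hz
  have hP₂sub : ∀ z, z ∈ P₂.support → z ∈ p'.support :=
    fun z hz => p'.support_dropUntil_subset hyp' hz
  have hq₁sub : ∀ z, z ∈ q₁.support → z ∈ q'.support := fun z hz => by
    rw [hq'eq, Walk.mem_support_append_iff]; exact Or.inl hz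
  have hd_rp' : ∀ z, z ∈ r.support → z ∈ p'.support → False := by
    have h := hp2
    rw [Walk.isPath_def, Walk.support_append, Walk.support_cons, List.tail_cons,
      List.nodup_append] at h
    exact fun z hz1 hz2 => h.2.2 z hz1 z hz2 rfl
  have hd_rq' : ∀ z, z ∈ r.support → z ∈ q'.support → False := by
    have h := hq2
    rw [Walk.isPath_def, Walk.support_append, Walk.support_cons, List.tail_cons,
      List.nodup_append] at h
    exact fun z hz1 hz2 => h.2.2 z hz1 z hz2 rfl
  have hd_tU_P₂t : ∀ z, z ∈ tU.support → z ∈ P₂.support.tail → False := by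
    have hh : (tU.append P₂).IsPath := by rw [hspec]; exact hp'
    rw [Walk.isPath_def, Walk.support_append, List.nodup_append] at hh
    exact fun z h1 h2 => hh.2.2 z h1 z h2 rfl
  -- the three paths of the diamond
  set A : G.Walk x y := Walk.cons h₁ tU with hAdef
  set B : G.Walk x y := Walk.cons h₂ q₁ with hBdef
  set W : G.Walk x y := r.reverse.append (Walk.cons hab P₂.reverse) with hWdef
  have hA : A.IsPath := by
    rw [hAdef, Walk.cons_isPath_iff]
    exact ⟨htUpath, fun hz => hxp' (htUsub _ hz)⟩
  have hB : B.IsPath := by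
    rw [hBdef, Walk.cons_isPath_iff]
    exact ⟨hq₁path, fun hz => hxq' (hq₁sub _ hz)⟩
  have hW : W.IsPath := by
    rw [hWdef, Walk.isPath_def, Walk.support_append, Walk.support_cons, List.tail_cons,
      Walk.support_reverse, Walk.support_reverse, List.nodup_append]
    refine ⟨List.nodup_reverse.mpr hr.support_nodup,
      List.nodup_reverse.mpr hP₂path.support_nodup, ?_⟩
    intro z hz1 z' hz2 hzz
    subst hzz
    rw [List.mem_reverse] at hz1 hz2
    exact hd_rp' z hz1 (hP₂sub _ hz2)
  have hWsub : ∀ z, z ∈ W.support → z ∈ r.support ∨ z ∈ P₂.support := by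
    intro z hz
    rw [hWdef, Walk.mem_support_append_iff] at hz
    rcases hz with hz | hz
    · left; rwa [Walk.support_reverse, List.mem_reverse] at hz
    · rw [Walk.support_cons, List.mem_cons] at hz
      rcases hz with rfl | hz
      · exact Or.inl r.start_mem_support
      · right; rwa [Walk.support_reverse, List.mem_reverse] at hz
  have heW : s(a, b) ∈ W.edges := by
    rw [hWdef, Walk.edges_append]
    exact List.mem_append_right _ (by rw [Walk.edges_cons]; exact List.mem_cons_self)
  have hAedges : ∀ f, f ∈ A.edges → f ∈ p.edges := by
    intro f hf
    rw [hAdef, Walk.edges_cons, List.mem_cons] at hf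
    rw [hpe, Walk.edges_append, List.mem_append, Walk.edges_cons, List.mem_cons]
    rcases hf with rfl | hf
    · exact Or.inr (Or.inl rfl)
    · exact Or.inr (Or.inr (p'.edges_takeUntil_subset hyp' hf))
  have hBedges : ∀ f, f ∈ B.edges → f ∈ q.edges := by
    intro f hf
    rw [hBdef, Walk.edges_cons, List.mem_cons] at hf
    rw [hqe, Walk.edges_append, List.mem_append, Walk.edges_cons, List.mem_cons]
    rcases hf with rfl | hf
    · exact Or.inr (Or.inl rfl)
    · refine Or.inr (Or.inr ?_)
      rw [hq'eq, Walk.edges_append, List.mem_append]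
      exact Or.inl hf
  have heA : s(a, b) ∉ A.edges := fun h => hep (hAedges _ h)
  have heB : s(a, b) ∉ B.edges := fun h => heq (hBedges _ h)
  have hAB : A ≠ B := by
    intro h
    have h1 : A.getVert 1 = x₁ := by
      rw [hAdef, show (1 : ℕ) = 0 + 1 from rfl, Walk.getVert_cons_succ, Walk.getVert_zero]
    have h2 : B.getVert 1 = x₂ := by
      rw [hBdef, show (1 : ℕ) = 0 + 1 from rfl, Walk.getVert_cons_succ, Walk.getVert_zero]
    rw [h] at h1
    exact hx12 (h1.symm.trans h2 ▸ rfl)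
  have hAW : A ≠ W := fun h => heA (by rw [h]; exact heW)
  have hBW : B ≠ W := fun h => heB (by rw [h]; exact heW)
  have hdAB : ∀ z, z ∈ A.support → z ∈ B.support → z = x ∨ z = y := by
    intro z hzA hzB
    rw [hAdef, Walk.support_cons, List.mem_cons] at hzA
    rw [hBdef, Walk.support_cons, List.mem_cons] at hzB
    rcases hzA with rfl | hzA
    · exact Or.inl rfl
    rcases hzB with rfl | hzB
    · exact Or.inl rfl
    · exact Or.inr (hminP z hzB (htUsub _ hzA))
  have hdAW : ∀ z, z ∈ A.support → z ∈ W.support → z = x ∨ z = y := by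
    intro z hzA hzW
    rw [hAdef, Walk.support_cons, List.mem_cons] at hzA
    rcases hzA with rfl | hzA
    · exact Or.inl rfl
    rcases hWsub z hzW with hz | hz
    · exact (hd_rp' z hz (htUsub _ hzA)).elim
    · rw [Walk.support_eq_cons P₂, List.mem_cons] at hz
      rcases hz with rfl | hz
      · exact Or.inr rfl
      · exact (hd_tU_P₂t z hzA hz).elim
  have hdBW : ∀ z, z ∈ B.support → z ∈ W.support → z = x ∨ z = y := by
    intro z hzB hzW
    rw [hBdef, Walk.support_cons, List.mem_cons] at hzB
    rcases hzB with rfl | hzB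
    · exact Or.inl rfl
    rcases hWsub z hzW with hz | hz
    · exact (hd_rq' z hz (hq₁sub _ hzB)).elim
    · exact Or.inr (hminP z hzB (hP₂sub _ hz))
  exact ⟨⟨x, y, hxy, A, B, W, hA, hB, hW, hAB, hAW, hBW, hdAB, hdAW, hdBW⟩⟩

end DiamondAux

namespace DiamondAux

open SimpleGraph Walk

variable {V : Type*} {G : SimpleGraph V}

lemma c_edge_contra {u v : V} {p₁ p₂ p₃ : G.Walk u v} (h₂ : p₂.IsPath)
    (hlen : p₂.length ≠ 1) (huv : u ≠ v)
    (hd₁₂ : ∀ x, x ∈ p₁.support → x ∈ p₂.support → x = u ∨ x = v)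
    (hd₂₃ : ∀ x, x ∈ p₂.support → x ∈ p₃.support → x = u ∨ x = v)
    (hset : ∀ f, f ∈ (p₁.append p₂.reverse).edges → f ∈ (p₁.append p₃.reverse).edges) :
    False := by
  cases p₂ with
  | nil => exact huv rfl
  | @cons _ x _ hadj t =>
    have hxmem : x ∈ (Walk.cons hadj t).support := by
      rw [Walk.support_cons, List.mem_cons]; exact Or.inr t.start_mem_support
    have hf : s(u, x) ∈ (p₁.append (Walk.cons hadj t).reverse).edges := by
      rw [Walk.edges_append, List.mem_append, Walk.edges_reverse, List.mem_reverse,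
        Walk.edges_cons]
      exact Or.inr List.mem_cons_self
    have hf2 := hset _ hf
    rw [Walk.edges_append, List.mem_append, Walk.edges_reverse, List.mem_reverse] at hf2
    have hxsup : x ∈ p₁.support ∨ x ∈ p₃.support :=
      hf2.imp (fun h => p₁.snd_mem_support_of_mem_edges h)
        (fun h => p₃.snd_mem_support_of_mem_edges h)
    have hx : x = u ∨ x = v :=
      hxsup.elim (fun h => hd₁₂ x h hxmem) (fun h => hd₂₃ x hxmem h)
    rw [Walk.cons_isPath_iff] at h₂
    rcases hx with rfl | rfl
    · exact h₂.2 t.start_mem_support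
    · have ht : t = Walk.nil := path_loop_eq h₂.1
      subst ht
      simp at hlen

lemma eq_single {u v : V} : ∀ {p : G.Walk u v}, p.length = 1 →
    ∃ ha : G.Adj u v, p = Walk.cons ha Walk.nil
  | Walk.nil, h => by simp at h
  | Walk.cons hadj t, h => by
    rw [Walk.length_cons] at h
    have ht : t.length = 0 := by omega
    have := Walk.eq_of_length_eq_zero ht
    subst this
    cases t with
    | nil => exact ⟨hadj, rfl⟩
    | cons h' t' => simp at ht

lemma exists_edge {u v : V} (h : u ≠ v) : ∀ (p : G.Walk u v), ∃ f, f ∈ p.edges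
  | Walk.nil => absurd rfl h
  | Walk.cons hadj t => ⟨_, by rw [Walk.edges_cons]; exact List.mem_cons_self⟩

end DiamondAux

open DiamondAux in
/-- A connected finite simple graph contains no diamond if and only if every edge lies in at
most one cycle (i.e. it is a cactus). -/
theorem diamond_free_iff_cactus (V : Type*) [Fintype V]
    (G : SimpleGraph V) (hconn : G.Connected) :
    IsEmpty G.Diamond ↔
      ∀ e : Sym2 V, ∀ s₁ ∈ G.cycleSet, ∀ s₂ ∈ G.cycleSet, e ∈ s₁ → e ∈ s₂ → s₁ = s₂ := by
  constructor
  · intro hno e s₁ hs₁ s₂ hs₂ he₁ he₂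
    by_contra hns
    obtain ⟨v₁, w₁, hw₁, rfl⟩ := hs₁
    obtain ⟨v₂, w₂, hw₂, rfl⟩ := hs₂
    simp only [Set.mem_setOf_eq] at he₁ he₂
    revert he₁ he₂
    induction e using Sym2.ind with
    | _ a b =>
      intro he₁ he₂
      have hadj : G.Adj a b := w₁.adj_of_mem_edges he₁
      obtain ⟨p, hp, hep, hiff₁⟩ := cycle_edge_decomp w₁ hw₁ hadj.ne he₁
      obtain ⟨q, hq, heq, hiff₂⟩ := cycle_edge_decomp w₂ hw₂ hadj.ne he₂
      have hpq : p ≠ q := by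
        rintro rfl
        exact hns (Set.ext fun f => by
          rw [Set.mem_setOf_eq, Set.mem_setOf_eq, hiff₁ f, hiff₂ f])
      obtain ⟨D⟩ := diamond_of_two_paths hadj p q hp hq hep heq hpq
      exact hno.false D
  · intro hcac
    constructor
    intro D
    have hc12 := append_reverse_isCycle D.ne D.p₁ D.p₂ D.h₁ D.h₂ D.ne₁₂ D.disj₁₂
    have hc13 := append_reverse_isCycle D.ne D.p₁ D.p₃ D.h₁ D.h₃ D.ne₁₃ D.disj₁₃
    have hm12 : {e | e ∈ (D.p₁.append D.p₂.reverse).edges} ∈ G.cycleSet :=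
      ⟨D.u, _, hc12, rfl⟩
    have hm13 : {e | e ∈ (D.p₁.append D.p₃.reverse).edges} ∈ G.cycleSet :=
      ⟨D.u, _, hc13, rfl⟩
    obtain ⟨f, hf⟩ := exists_edge D.ne D.p₁
    have hf12 : f ∈ (D.p₁.append D.p₂.reverse).edges := by
      rw [Walk.edges_append, List.mem_append]; exact Or.inl hf
    have hf13 : f ∈ (D.p₁.append D.p₃.reverse).edges := by
      rw [Walk.edges_append, List.mem_append]; exact Or.inl hf
    have hsets := hcac f _ hm12 _ hm13 hf12 hf13
    have hset : ∀ g, g ∈ (D.p₁.append D.p₂.reverse).edges ↔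
        g ∈ (D.p₁.append D.p₃.reverse).edges := by
      intro g
      have := Set.ext_iff.mp hsets g
      simpa only [Set.mem_setOf_eq] using this
    by_cases hl2 : D.p₂.length = 1
    · by_cases hl3 : D.p₃.length = 1
      · obtain ⟨a2, e2⟩ := eq_single hl2
        obtain ⟨a3, e3⟩ := eq_single hl3
        exact D.ne₂₃ (by rw [e2, e3])
      · exact c_edge_contra D.h₃ hl3 D.ne D.disj₁₃
          (fun x hx3 hx2 => D.disj₂₃ x hx2 hx3)
          (fun g hg => (hset g).mpr hg)
    · exact c_edge_contra D.h₂ hl2 D.ne D.disj₁₂ D.disj₂₃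
        (fun g hg => (hset g).mp hg)
end

section
/- Let C₁ and C₂ be two distinct cycles of a finite simple graph that share at least one edge. Then the union C₁ ∪ C₂ contains a diamond, and this diamond has at most ||C₁|| + ||C₂|| − 1 edges, where ||C|| denotes the number of edges of C. -/
open SimpleGraph

variable {V : Type*}

variable {G : SimpleGraph V}

lemma aux_len_pos_of_ne {u v : V} (p : G.Walk u v) (h : u ≠ v) : 0 < p.length := by
  cases p with
  | nil => exact absurd rfl h
  | cons h p => simp

lemma aux_end_mem_tail {u v : V} (p : G.Walk u v) (h : u ≠ v) : v ∈ p.support.tail := by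
  have h2 := p.end_mem_support
  rw [p.support_eq_cons, List.mem_cons] at h2
  rcases h2 with h2 | h2
  · exact absurd h2.symm h
  · exact h2

lemma aux_cycle_end_mem_tail {a : V} (c : G.Walk a a) (hc : 0 < c.length) :
    a ∈ c.support.tail := by
  cases c with
  | nil => simp at hc
  | cons h p => simp [p.end_mem_support]

lemma aux_mem_support_iff_tail {a : V} (c : G.Walk a a) (hc : 0 < c.length) (z : V) :
    z ∈ c.support ↔ z ∈ c.support.tail := by
  constructor
  · intro h
    rw [c.support_eq_cons, List.mem_cons] at h
    rcases h with rfl | h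
    · exact aux_cycle_end_mem_tail c hc
    · exact h
  · exact fun h => List.mem_of_mem_tail h

/-- Splitting a cycle at an interior vertex gives two paths meeting only at the endpoints. -/
lemma aux_cycle_split [DecidableEq V] {a : V} {c : G.Walk a a} (hc : c.IsCycle)
    {b : V} (hb : b ∈ c.support) (hab : b ≠ a) :
    (c.takeUntil b hb).IsPath ∧ (c.dropUntil b hb).IsPath ∧
    (∀ z, z ∈ (c.takeUntil b hb).support → z ∈ (c.dropUntil b hb).support → z = a ∨ z = b) ∧
    (c.takeUntil b hb).edges.Disjoint (c.dropUntil b hb).edges ∧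
    (c.takeUntil b hb).length + (c.dropUntil b hb).length = c.length := by
  set t := c.takeUntil b hb with ht
  set d := c.dropUntil b hb with hd
  have hspec := c.take_spec hb
  have hlen : t.length + d.length = c.length := by
    have := congrArg Walk.length hspec
    rwa [Walk.length_append] at this
  have hsup : c.support.tail = t.support.tail ++ d.support.tail := by
    conv_lhs => rw [← hspec]
    rw [Walk.tail_support_append]
  have hnd : c.support.tail.Nodup := hc.2
  rw [hsup] at hnd
  have hndt := (List.nodup_append.mp hnd).1
  have hndd := (List.nodup_append.mp hnd).2.1
  have hdisj : ∀ z, z ∈ t.support.tail → z ∈ d.support.tail → False := by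
    intro z h1 h2
    exact (List.nodup_append'.mp hnd).2.2 h1 h2
  have hba : a ≠ b := hab.symm
  have hbt : b ∈ t.support.tail := aux_end_mem_tail t hba
  have had : a ∈ d.support.tail := aux_end_mem_tail d hab
  have hta : a ∉ t.support.tail := fun h => hdisj a h had
  have hdb : b ∉ d.support.tail := fun h => hdisj b hbt h
  have htp : t.IsPath := by
    rw [Walk.isPath_def, t.support_eq_cons]
    exact List.nodup_cons.mpr ⟨hta, hndt⟩
  have hdp : d.IsPath := by
    rw [Walk.isPath_def, d.support_eq_cons]
    exact List.nodup_cons.mpr ⟨hdb, hndd⟩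
  refine ⟨htp, hdp, ?_, ?_, hlen⟩
  · intro z hzt hzd
    rw [t.support_eq_cons, List.mem_cons] at hzt
    rw [d.support_eq_cons, List.mem_cons] at hzd
    rcases hzt with rfl | hzt
    · exact Or.inl rfl
    rcases hzd with rfl | hzd
    · exact Or.inr rfl
    exact absurd (hdisj z hzt hzd) (fun h => h)
  · have hce : c.edges = t.edges ++ d.edges := by
      have := congrArg Walk.edges hspec
      rw [Walk.edges_append] at this
      exact this.symm
    have := hc.isTrail.edges_nodup
    rw [hce] at this
    exact (List.nodup_append'.mp this).2.2

/-- Ear extraction: a path with endpoints in `S` containing an edge outside `E₁` contains a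
subpath between two distinct vertices of `S`, internally disjoint from `S`, still containing
an edge outside `E₁`. -/
lemma aux_ear [DecidableEq V] (S : Set V) (E₁ : Set (Sym2 V)) :
    ∀ (n : ℕ) (x y : V) (q : G.Walk x y), q.length ≤ n → q.IsPath → x ∈ S → y ∈ S → x ≠ y →
    (∃ f ∈ q.edges, f ∉ E₁) →
    ∃ (u v : V) (P : G.Walk u v), u ≠ v ∧ P.IsPath ∧ u ∈ S ∧ v ∈ S ∧
      (∀ e ∈ P.edges, e ∈ q.edges) ∧ P.length ≤ q.length ∧ (∃ f ∈ P.edges, f ∉ E₁) ∧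
      (∀ z ∈ P.support, z ∈ S → z = u ∨ z = v) := by
  intro n
  induction n with
  | zero =>
    intro x y q hlen hq hx hy hxy hbad
    obtain ⟨f, hf, -⟩ := hbad
    have : 0 < q.length := by
      rcases Nat.eq_zero_or_pos q.length with h | h
      · exfalso; exact hxy (Walk.eq_of_length_eq_zero h)
      · exact h
    omega
  | succ n ih =>
    intro x y q hlen hq hx hy hxy hbad
    by_cases hint : ∃ z ∈ q.support, z ∈ S ∧ z ≠ x ∧ z ≠ y
    · obtain ⟨z, hzsup, hzS, hzx, hzy⟩ := hint
      have hspec := q.take_spec hzsup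
      set t := q.takeUntil z hzsup with htdef
      set d := q.dropUntil z hzsup with hddef
      have hlen2 : t.length + d.length = q.length := by
        have := congrArg Walk.length hspec
        rwa [Walk.length_append] at this
      have htpos : 0 < t.length := aux_len_pos_of_ne t (Ne.symm hzx)
      have hdpos : 0 < d.length := aux_len_pos_of_ne d hzy
      have hedges : q.edges = t.edges ++ d.edges := by
        have := congrArg Walk.edges hspec
        rw [Walk.edges_append] at this
        exact this.symm
      obtain ⟨f, hf, hfE⟩ := hbad
      rw [hedges, List.mem_append] at hf
      rcases hf with hf | hf
      · obtain ⟨u, v, P, h1, h2, h3, h4, h5, h6, h7, h8⟩ :=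
          ih x z t (by omega) (hq.takeUntil hzsup) hx hzS (Ne.symm hzx) ⟨f, hf, hfE⟩
        exact ⟨u, v, P, h1, h2, h3, h4,
          fun e he => (hedges ▸ List.mem_append.mpr (Or.inl (h5 e he))),
          by omega, h7, h8⟩
      · obtain ⟨u, v, P, h1, h2, h3, h4, h5, h6, h7, h8⟩ :=
          ih z y d (by omega) (hq.dropUntil hzsup) hzS hy hzy ⟨f, hf, hfE⟩
        exact ⟨u, v, P, h1, h2, h3, h4,
          fun e he => (hedges ▸ List.mem_append.mpr (Or.inr (h5 e he))),
          by omega, h7, h8⟩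
    · push_neg at hint
      refine ⟨x, y, q, hxy, hq, hx, hy, fun e he => he, le_refl _, hbad, ?_⟩
      intro z hz hzS
      by_contra hcon
      push_neg at hcon
      exact hcon.2 (hint z hz hzS hcon.1)

section AuxDiamond

lemma aux_main [DecidableEq V] {v₁ v₂ : V} (w₁ : G.Walk v₁ v₁) (w₂ : G.Walk v₂ v₂)
    (h₁ : w₁.IsCycle) (h₂ : w₂.IsCycle)
    (hbad : ∃ f ∈ w₂.edges, f ∉ w₁.edges)
    (hshare : ∃ e, e ∈ w₁.edges ∧ e ∈ w₂.edges) :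
    ∃ D : G.Diamond,
      D.edgeSet ⊆ {e | e ∈ w₁.edges} ∪ {e | e ∈ w₂.edges} ∧
      D.size ≤ w₁.length + w₂.length - 1 := by
  obtain ⟨e, he1, he2⟩ := hshare
  revert he1 he2
  induction e using Sym2.ind with
  | _ a b =>
  intro he1 he2
  have hadj : G.Adj a b := w₁.adj_of_mem_edges he1
  have hab : a ≠ b := hadj.ne
  have haw1 : a ∈ w₁.support := w₁.fst_mem_support_of_mem_edges he1
  have hbw1 : b ∈ w₁.support := w₁.snd_mem_support_of_mem_edges he1
  have haw2 : a ∈ w₂.support := w₂.fst_mem_support_of_mem_edges he2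
  have hbw2 : b ∈ w₂.support := w₂.snd_mem_support_of_mem_edges he2
  -- rotate the second cycle at `a`
  set c₂ := w₂.rotate a haw2 with hc2def
  have hc₂ : c₂.IsCycle := h₂.rotate haw2
  have hc₂len : c₂.length = w₂.length := by
    have h' := (w₂.rotate_edges a haw2).perm.length_eq
    rwa [Walk.length_edges, Walk.length_edges] at h'
  have hc₂pos : 0 < c₂.length := by have := hc₂.three_le_length; omega
  have hw₂pos : 0 < w₂.length := by have := h₂.three_le_length; omega
  have hedge₂ : ∀ e, e ∈ c₂.edges ↔ e ∈ w₂.edges := fun e => (w₂.rotate_edges a haw2).mem_iff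
  have hmem₂ : ∀ z, z ∈ c₂.support ↔ z ∈ w₂.support := by
    intro z
    rw [aux_mem_support_iff_tail c₂ hc₂pos, (Walk.support_rotate w₂ a haw2).mem_iff,
      ← aux_mem_support_iff_tail w₂ hw₂pos]
  have hbc₂ : b ∈ c₂.support := (hmem₂ b).mpr hbw2
  obtain ⟨ht2p, hd2p, -, -, hlen2⟩ := aux_cycle_split hc₂ hbc₂ hab.symm
  set t₂ := c₂.takeUntil b hbc₂ with ht2def
  set d₂ := c₂.dropUntil b hbc₂ with hd2def
  have hspec₂ := c₂.take_spec hbc₂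
  have hedges₂ : c₂.edges = t₂.edges ++ d₂.edges := by
    have h' := congrArg Walk.edges hspec₂
    rw [Walk.edges_append] at h'
    exact h'.symm
  have htpos : 0 < t₂.length := aux_len_pos_of_ne t₂ hab
  have hdpos : 0 < d₂.length := aux_len_pos_of_ne d₂ hab.symm
  obtain ⟨f, hfw2, hfw1⟩ := hbad
  have hfc₂ : f ∈ c₂.edges := (hedge₂ f).mpr hfw2
  rw [hedges₂, List.mem_append] at hfc₂
  -- extract the ear
  have key : ∃ (u v : V) (P : G.Walk u v), u ≠ v ∧ P.IsPath ∧ u ∈ w₁.support ∧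
      v ∈ w₁.support ∧ (∀ e ∈ P.edges, e ∈ w₂.edges) ∧ P.length + 1 ≤ w₂.length ∧
      (∃ f ∈ P.edges, f ∉ w₁.edges) ∧
      (∀ z ∈ P.support, z ∈ w₁.support → z = u ∨ z = v) := by
    rcases hfc₂ with hf | hf
    · obtain ⟨u, v, P, k1, k2, k3, k4, k5, k6, k7, k8⟩ :=
        aux_ear {z | z ∈ w₁.support} {e | e ∈ w₁.edges} t₂.length a b t₂ le_rfl ht2p
          haw1 hbw1 hab ⟨f, hf, hfw1⟩
      refine ⟨u, v, P, k1, k2, k3, k4, ?_, ?_, k7, k8⟩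
      · intro e he
        exact (hedge₂ e).mp (c₂.edges_takeUntil_subset hbc₂ (k5 e he))
      · omega
    · obtain ⟨u, v, P, k1, k2, k3, k4, k5, k6, k7, k8⟩ :=
        aux_ear {z | z ∈ w₁.support} {e | e ∈ w₁.edges} d₂.length b a d₂ le_rfl hd2p
          hbw1 haw1 hab.symm ⟨f, hf, hfw1⟩
      refine ⟨u, v, P, k1, k2, k3, k4, ?_, ?_, k7, k8⟩
      · intro e he
        exact (hedge₂ e).mp (c₂.edges_dropUntil_subset hbc₂ (k5 e he))
      · omega
  obtain ⟨u, v, P, huv, hP, huS, hvS, hPe, hPlen, hPbad, hPint⟩ := key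
  -- rotate the first cycle at `u` and split at `v`
  set c₁ := w₁.rotate u huS with hc1def
  have hc₁ : c₁.IsCycle := h₁.rotate huS
  have hc₁len : c₁.length = w₁.length := by
    have h' := (w₁.rotate_edges u huS).perm.length_eq
    rwa [Walk.length_edges, Walk.length_edges] at h'
  have hc₁pos : 0 < c₁.length := by have := hc₁.three_le_length; omega
  have hw₁pos : 0 < w₁.length := by have := h₁.three_le_length; omega
  have hedge₁ : ∀ e, e ∈ c₁.edges ↔ e ∈ w₁.edges := fun e => (w₁.rotate_edges u huS).mem_iff
  have hmem₁ : ∀ z, z ∈ c₁.support ↔ z ∈ w₁.support := by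
    intro z
    rw [aux_mem_support_iff_tail c₁ hc₁pos, (Walk.support_rotate w₁ u huS).mem_iff,
      ← aux_mem_support_iff_tail w₁ hw₁pos]
  have hvc₁ : v ∈ c₁.support := (hmem₁ v).mpr hvS
  obtain ⟨hP₁p, hD₁p, hint1, hdisjE, hlen1⟩ := aux_cycle_split hc₁ hvc₁ huv.symm
  set P₁ := c₁.takeUntil v hvc₁ with hP1def
  set D₁ := c₁.dropUntil v hvc₁ with hD1def
  have hP₂p : D₁.reverse.IsPath := hD₁p.reverse
  have hP₂edges : ∀ e, e ∈ D₁.reverse.edges ↔ e ∈ D₁.edges := by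
    intro e; rw [Walk.edges_reverse, List.mem_reverse]
  have hP₂sup : ∀ z, z ∈ D₁.reverse.support ↔ z ∈ D₁.support := by
    intro z; rw [Walk.support_reverse, List.mem_reverse]
  have hP₁w₁ : ∀ e ∈ P₁.edges, e ∈ w₁.edges := fun e he =>
    (hedge₁ e).mp (c₁.edges_takeUntil_subset hvc₁ he)
  have hD₁w₁ : ∀ e ∈ D₁.edges, e ∈ w₁.edges := fun e he =>
    (hedge₁ e).mp (c₁.edges_dropUntil_subset hvc₁ he)
  have hP₁pos : 0 < P₁.length := aux_len_pos_of_ne P₁ huv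
  refine ⟨⟨u, v, huv, P₁, D₁.reverse, P, hP₁p, hP₂p, hP, ?_, ?_, ?_, ?_, ?_, ?_⟩, ?_, ?_⟩
  · -- P₁ ≠ D₁.reverse
    intro heq
    have hne0 : P₁.edges ≠ [] := by
      intro h0
      have := P₁.length_edges
      rw [h0] at this
      simp at this
      omega
    obtain ⟨e₀, he₀⟩ := List.exists_mem_of_ne_nil _ hne0
    have : e₀ ∈ D₁.reverse.edges := heq ▸ he₀
    exact hdisjE he₀ ((hP₂edges e₀).mp this)
  · -- P₁ ≠ P
    intro heq
    obtain ⟨f', hf'P, hf'w1⟩ := hPbad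
    exact hf'w1 (hP₁w₁ f' (heq ▸ hf'P))
  · -- D₁.reverse ≠ P
    intro heq
    obtain ⟨f', hf'P, hf'w1⟩ := hPbad
    exact hf'w1 (hD₁w₁ f' ((hP₂edges f').mp (heq ▸ hf'P)))
  · intro x hx1 hx2
    exact hint1 x hx1 ((hP₂sup x).mp hx2)
  · intro x hx1 hx2
    exact hPint x hx2 ((hmem₁ x).mp (c₁.support_takeUntil_subset hvc₁ hx1))
  · intro x hx1 hx2
    exact hPint x hx2 ((hmem₁ x).mp (c₁.support_dropUntil_subset hvc₁ ((hP₂sup x).mp hx1)))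
  · -- edge set is contained in the union of the two cycles
    intro e he
    simp only [SimpleGraph.Diamond.edgeSet, Set.mem_setOf_eq] at he
    rcases he with he | he | he
    · exact Or.inl (hP₁w₁ e he)
    · exact Or.inl (hD₁w₁ e ((hP₂edges e).mp he))
    · exact Or.inr (hPe e he)
  · -- size bound
    simp only [SimpleGraph.Diamond.size]
    rw [Walk.length_reverse]
    omega

end AuxDiamond

/-- If two distinct cycles `C₁`, `C₂` of a finite simple graph share an edge, then `C₁ ∪ C₂`
contains a diamond with at most `‖C₁‖ + ‖C₂‖ − 1` edges. -/
theorem diamond_of_two_cycles_sharing_edge (V : Type*) [Fintype V]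
    (G : SimpleGraph V) (v₁ v₂ : V) (w₁ : G.Walk v₁ v₁) (w₂ : G.Walk v₂ v₂)
    (h₁ : w₁.IsCycle) (h₂ : w₂.IsCycle)
    (hne : {e | e ∈ w₁.edges} ≠ {e | e ∈ w₂.edges})
    (hshare : ∃ e, e ∈ w₁.edges ∧ e ∈ w₂.edges) :
    ∃ D : G.Diamond,
      D.edgeSet ⊆ {e | e ∈ w₁.edges} ∪ {e | e ∈ w₂.edges} ∧
      D.size ≤ w₁.length + w₂.length - 1 := by
  classical
  by_cases hb : ∃ f ∈ w₂.edges, f ∉ w₁.edges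
  · exact aux_main w₁ w₂ h₁ h₂ hb hshare
  · push_neg at hb
    have hb2 : ∃ f ∈ w₁.edges, f ∉ w₂.edges := by
      by_contra hcon
      push_neg at hcon
      exact hne (Set.Subset.antisymm (fun e he => hcon e he) (fun e he => hb e he))
    obtain ⟨e, he1, he2⟩ := hshare
    obtain ⟨D, hD1, hD2⟩ := aux_main w₂ w₁ h₂ h₁ hb2 ⟨e, he2, he1⟩
    refine ⟨D, ?_, by omega⟩
    rwa [Set.union_comm]
end
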